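/- Let x, y, s, t be integers such that x^2 + s^2 - s^4 = t^2 and y^2 + t^2 - t^4 = s^2. Then (x,y,s,t) = (±1, 0, 0, ±1), or (0, ±1, ±1, 0), or (±u^2, ±u^2, ±u, ±u) for some integer u. -/
import Mathlib

lemma sq_eq_cases' (a b : ℤ) (h : a^2 = b^2) : a = b ∨ a = -b := by
  have h0 : (a - b) * (a + b) = 0 := by ring_nf; linarith
  rcases mul_eq_zero.mp h0 with h' | h' <;> [left; right] <;> omega

lemma sq_bound' (a b : ℤ) (hb : 0 ≤ b) (h : a^2 < b^2) : a^2 ≤ (b-1)^2 := by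
  have h1 : |a| < b := abs_lt_of_sq_lt_sq h hb
  have h2 : 0 ≤ |a| := abs_nonneg a
  have h3 : a^2 = |a|^2 := (sq_abs a).symm
  nlinarith

theorem stmt_0 (x y s t : ℤ)
    (h1 : x^2 + s^2 - s^4 = t^2) (h2 : y^2 + t^2 - t^4 = s^2) :
    ((x = 1 ∨ x = -1) ∧ y = 0 ∧ s = 0 ∧ (t = 1 ∨ t = -1)) ∨
    (x = 0 ∧ (y = 1 ∨ y = -1) ∧ (s = 1 ∨ s = -1) ∧ t = 0) ∨
    (∃ u : ℤ, (x = u^2 ∨ x = -u^2) ∧ (y = u^2 ∨ y = -u^2) ∧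
      (s = u ∨ s = -u) ∧ (t = u ∨ t = -u)) := by
  have hs0 : 0 ≤ s^2 := sq_nonneg s
  have ht0 : 0 ≤ t^2 := sq_nonneg t
  rcases lt_trichotomy (s^2) (t^2) with hst | hst | hst
  · -- t^2 > s^2 : case 1
    left
    have hb : y^2 ≤ (t^2 - 1)^2 := sq_bound' y (t^2) ht0 (by nlinarith)
    have hlb : (t^2 - 1)^2 ≤ y^2 := by nlinarith
    have hkey : s^2 + t^2 = 1 := by nlinarith
    have hs : s = 0 := by nlinarith [sq_nonneg s]
    have ht2 : t^2 = 1 := by nlinarith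
    have hx2 : x^2 = 1 := by nlinarith
    have hy : y = 0 := by nlinarith [sq_nonneg y]
    exact ⟨sq_eq_cases' x 1 (by rw [one_pow]; linarith), hy, hs,
      sq_eq_cases' t 1 (by rw [one_pow]; linarith)⟩
  · -- s^2 = t^2 : family
    right; right
    exact ⟨s, sq_eq_cases' x (s^2) (by nlinarith), sq_eq_cases' y (s^2) (by nlinarith),
      Or.inl rfl, sq_eq_cases' t s hst.symm⟩
  · -- s^2 > t^2 : case 2
    right; left
    have hb : x^2 ≤ (s^2 - 1)^2 := sq_bound' x (s^2) hs0 (by nlinarith)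
    have hlb : (s^2 - 1)^2 ≤ x^2 := by nlinarith
    have hkey : s^2 + t^2 = 1 := by nlinarith
    have ht : t = 0 := by nlinarith [sq_nonneg t]
    have hs2 : s^2 = 1 := by nlinarith
    have hy2 : y^2 = 1 := by nlinarith
    have hx : x = 0 := by nlinarith [sq_nonneg x]
    exact ⟨hx, sq_eq_cases' y 1 (by rw [one_pow]; linarith),
      sq_eq_cases' s 1 (by rw [one_pow]; linarith), ht⟩
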